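/- Let A : Fin n → Fin n → Fin 3 → ℕ be paired-comparison data with A i j k = A j i (2 - k) (symmetry). Define Davidson's conditions: DC1: there exist i₁, j₁ with A i₁ j₁ 1 > 0 (an 'equal' judgment, using index 1 for ties); DC2: for every nonempty proper subset S of Fin n there exist i₂, i₃ ∈ S and j₂, j₃ ∉ S with A i₂ j₂ 2 > 0 and A i₃ j₃ 0 > 0. Define the SC conditions with the directed graph DG where i → j iff A i j 2 > 0: SC1 = DC1; SC2: DG contains a directed cycle; SC3: for every nonempty proper subset S of Fin n, either there exist i₂, i₃ ∈ S, j₂, j₃ ∉ S with A i₂ j₂ 2 > 0 and A i₃ j₃ 0 > 0, or there exist i₄ ∈ S, j₄ ∉ S with A i₄ j₄ 1 > 0. Then DC1 and DC2 together imply SC1, SC2 and SC3. -/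
import Mathlib

theorem DC_implies_SC
    (n : ℕ) (hn : 2 ≤ n) (A : Fin n → Fin n → Fin 3 → ℕ)
    (hsym : ∀ i j k, A i j k = A j i (2 - k))
    (hdiag : ∀ i k, A i i k = 0)
    (hDC1 : ∃ i₁ j₁, 0 < A i₁ j₁ 1)
    (hDC2 : ∀ S : Finset (Fin n), S.Nonempty → S ≠ Finset.univ →
      (∃ i₂ ∈ S, ∃ j₂ ∉ S, 0 < A i₂ j₂ 2) ∧ (∃ i₃ ∈ S, ∃ j₃ ∉ S, 0 < A i₃ j₃ 0)) :
    (∃ i₁ j₁, 0 < A i₁ j₁ 1) ∧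
    (∃ v : Fin n, Relation.TransGen (fun i j => 0 < A i j 2) v v) ∧
    (∀ S : Finset (Fin n), S.Nonempty → S ≠ Finset.univ →
      ((∃ i₂ ∈ S, ∃ j₂ ∉ S, 0 < A i₂ j₂ 2) ∧ (∃ i₃ ∈ S, ∃ j₃ ∉ S, 0 < A i₃ j₃ 0)) ∨
      (∃ i₄ ∈ S, ∃ j₄ ∉ S, 0 < A i₄ j₄ 1)) := by
  refine ⟨hDC1, ?_, fun S hS hS' => Or.inl (hDC2 S hS hS')⟩
  -- every vertex has an out-neighbor
  have hout : ∀ i : Fin n, ∃ j, 0 < A i j 2 := by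
    intro i
    have hne : ({i} : Finset (Fin n)) ≠ Finset.univ := by
      intro h
      have : (Finset.univ : Finset (Fin n)).card = 1 := by
        rw [← h]; simp
      simp [Finset.card_univ] at this
      omega
    obtain ⟨⟨i₂, hi₂, j₂, hj₂, hpos⟩, -⟩ := hDC2 {i} ⟨i, Finset.mem_singleton_self i⟩ hne
    rw [Finset.mem_singleton] at hi₂
    exact ⟨j₂, hi₂ ▸ hpos⟩
  choose f hf using hout
  have hn0 : 0 < n := by omega
  let x₀ : Fin n := ⟨0, hn0⟩
  have hstep : ∀ m : ℕ, Relation.TransGen (fun i j => 0 < A i j 2) x₀ (f^[m+1] x₀) := by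
    intro m
    induction m with
    | zero => exact Relation.TransGen.single (hf x₀)
    | succ m ih =>
      rw [Function.iterate_succ_apply']
      exact Relation.TransGen.tail ih (hf _)
  -- pigeonhole: some repeats among f^[k] x₀, k ∈ [0, n]
  have : ∃ a b : ℕ, a < b ∧ b ≤ n ∧ f^[a] x₀ = f^[b] x₀ := by
    have : ¬ Function.Injective (fun k : Fin (n+1) => f^[(k : ℕ)] x₀) := by
      intro hinj
      have := Fintype.card_le_of_injective _ hinj
      simp at this
    rw [Function.not_injective_iff] at this
    obtain ⟨a, b, hab, hne⟩ := this
    rcases Nat.lt_or_ge (a : ℕ) b with h | h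
    · exact ⟨a, b, h, Nat.lt_succ_iff.mp b.isLt, hab⟩
    · have h' : (b : ℕ) < a := lt_of_le_of_ne h (by
        intro he; exact hne (Fin.ext he.symm))
      exact ⟨b, a, h', Nat.lt_succ_iff.mp a.isLt, hab.symm⟩
  obtain ⟨a, b, hab, -, heq⟩ := this
  refine ⟨f^[a] x₀, ?_⟩
  have key : ∀ m : ℕ, ∀ y : Fin n,
      Relation.TransGen (fun i j => 0 < A i j 2) y (f^[m+1] y) := by
    intro m
    induction m with
    | zero => intro y; exact Relation.TransGen.single (hf y)
    | succ m ih =>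
      intro y
      rw [Function.iterate_succ_apply']
      exact Relation.TransGen.tail (ih y) (hf _)
  have : f^[b] x₀ = f^[(b - a - 1) + 1] (f^[a] x₀) := by
    rw [← Function.iterate_add_apply]
    congr 1
    omega
  nth_rewrite 2 [heq]
  rw [this]
  exact key _ _
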